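/- Let H be a finite set of hypotheses, each hypothesis h ∈ H being a function {0,1}ⁿ → {0,1}. Let f : {0,1}ⁿ → {0,1} be a target function and P a probability distribution on {0,1}ⁿ. Fix ε ∈ (0,1/2) and δ ∈ (0,1). If m ≥ (1/ε)·ln(|H|/δ), then with probability at least 1-δ over m i.i.d. samples x₁,…,x_m drawn from P, every hypothesis h ∈ H that is consistent with the samples (h(x_j) = f(x_j) for all j) satisfies Pr_{x∼P}[h(x) = f(x)] ≥ 1 - ε. -/
import Mathlib


open MeasureTheory ENNReal

theorem stmt_4 (n m : ℕ) (H : Finset ((Fin n → Bool) → Bool))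
    (f : (Fin n → Bool) → Bool) (P : Measure (Fin n → Bool))
    [IsProbabilityMeasure P] (ε δ : ℝ) (hε : ε ∈ Set.Ioo (0 : ℝ) (1 / 2))
    (hδ : δ ∈ Set.Ioo (0 : ℝ) 1)
    (hm : (1 / ε) * Real.log ((H.card : ℝ) / δ) ≤ (m : ℝ)) :
    ENNReal.ofReal (1 - δ) ≤
      (Measure.pi fun _ : Fin m => P)
        {xs : Fin m → (Fin n → Bool) |
          ∀ h ∈ H, (∀ j : Fin m, h (xs j) = f (xs j)) →
            ENNReal.ofReal (1 - ε) ≤ P {x | h x = f x}} := by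
  classical
  obtain ⟨hε0, hε2⟩ := hε
  obtain ⟨hδ0, hδ1⟩ := hδ
  set μ := Measure.pi fun _ : Fin m => P with hμ
  rcases H.eq_empty_or_nonempty with hHe | hH
  · subst hHe
    simp only [Finset.notMem_empty, false_implies, implies_true, Set.setOf_true]
    calc ENNReal.ofReal (1 - δ) ≤ 1 := ENNReal.ofReal_le_one.mpr (by linarith)
      _ = μ Set.univ := measure_univ.symm
  · set N := H.card with hN
    have hN1 : (1:ℝ) ≤ N := by exact_mod_cast Finset.card_pos.mpr hH
    have key : Real.exp (-(ε * m)) ≤ δ / N := by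
      have hL : Real.log ((N:ℝ)/δ) ≤ ε * m := by
        have h := mul_le_mul_of_nonneg_left hm hε0.le
        rwa [← mul_assoc, mul_one_div, div_self hε0.ne', one_mul] at h
      have hpos : (0:ℝ) < δ / N := div_pos hδ0 (by linarith)
      have hlog : Real.log (δ / (N:ℝ)) = - Real.log ((N:ℝ)/δ) := by
        rw [← Real.log_inv, inv_div]
      have hle : -(ε*m) ≤ Real.log (δ / (N:ℝ)) := by rw [hlog]; linarith
      calc Real.exp (-(ε*m)) ≤ Real.exp (Real.log (δ/(N:ℝ))) := Real.exp_le_exp.mpr hle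
        _ = δ / N := Real.exp_log hpos
    have hpow : (1-ε)^m ≤ δ / N := by
      calc (1-ε)^m ≤ (Real.exp (-ε))^m :=
            pow_le_pow_left₀ (by linarith) (by linarith [Real.add_one_le_exp (-ε)]) m
        _ = Real.exp (-(ε*m)) := by rw [← Real.exp_nat_mul]; congr 1; ring
        _ ≤ δ / N := key
    set Bad := H.filter (fun h => P {x | h x = f x} < ENNReal.ofReal (1-ε)) with hBad
    set E := ⋃ h ∈ Bad, {xs : Fin m → (Fin n → Bool) | ∀ j, h (xs j) = f (xs j)} with hE
    have hCh : ∀ h : (Fin n → Bool) → Bool,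
        μ {xs : Fin m → (Fin n → Bool) | ∀ j, h (xs j) = f (xs j)}
          = (P {x | h x = f x})^m := by
      intro h
      have heq : {xs : Fin m → (Fin n → Bool) | ∀ j, h (xs j) = f (xs j)}
          = Set.pi Set.univ (fun _ : Fin m => {x | h x = f x}) := by
        ext xs; simp [Set.mem_pi]
      rw [heq, hμ, Measure.pi_pi]
      simp
    have hBadBound : ∀ h ∈ Bad,
        μ {xs : Fin m → (Fin n → Bool) | ∀ j, h (xs j) = f (xs j)}
          ≤ ENNReal.ofReal (δ / N) := by
      intro h hh
      rw [hCh]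
      have hlt := (Finset.mem_filter.mp hh).2
      calc (P {x | h x = f x})^m ≤ (ENNReal.ofReal (1-ε))^m := by gcongr
        _ = ENNReal.ofReal ((1-ε)^m) := (ENNReal.ofReal_pow (by linarith) m).symm
        _ ≤ ENNReal.ofReal (δ/N) := ENNReal.ofReal_le_ofReal hpow
    have hEbound : μ E ≤ ENNReal.ofReal δ := by
      calc μ E ≤ ∑ h ∈ Bad, μ {xs : Fin m → (Fin n → Bool) | ∀ j, h (xs j) = f (xs j)} :=
            measure_biUnion_finset_le Bad _
        _ ≤ ∑ _h ∈ Bad, ENNReal.ofReal (δ/N) := Finset.sum_le_sum hBadBound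
        _ = (Bad.card : ℝ≥0∞) * ENNReal.ofReal (δ/N) := by
              rw [Finset.sum_const, nsmul_eq_mul]
        _ ≤ (N : ℝ≥0∞) * ENNReal.ofReal (δ/N) := by
              gcongr; exact_mod_cast Finset.card_filter_le _ _
        _ = ENNReal.ofReal δ := by
              rw [← ENNReal.ofReal_natCast, ← ENNReal.ofReal_mul (Nat.cast_nonneg N)]
              congr 1
              field_simp
    have hsub : Eᶜ ⊆ {xs : Fin m → (Fin n → Bool) |
        ∀ h ∈ H, (∀ j : Fin m, h (xs j) = f (xs j)) →
          ENNReal.ofReal (1 - ε) ≤ P {x | h x = f x}} := by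
      intro xs hxs h hhH hcons
      by_contra hlt
      push_neg at hlt
      exact hxs (Set.mem_biUnion (Finset.mem_filter.mpr ⟨hhH, hlt⟩) hcons)
    calc ENNReal.ofReal (1-δ) = 1 - ENNReal.ofReal δ := by
          rw [ENNReal.ofReal_sub 1 hδ0.le, ENNReal.ofReal_one]
      _ ≤ 1 - μ E := tsub_le_tsub_left hEbound 1
      _ = μ Eᶜ := (prob_compl_eq_one_sub (MeasurableSet.of_discrete)).symm
      _ ≤ _ := measure_mono hsub
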